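/- For a linear code U with trivial hull and generator matrix G, the row space (image under row-vector action) of Σ_U = Gᵀ(G·Gᵀ)⁻¹G equals U; in particular rank(Σ_U) = dim U. -/

import Mathlib

open Matrix

/-- The orthogonal complement (dual code) of a linear code `U ⊆ F^n` with respect to the
standard bilinear form `⟨x, y⟩ = ∑ i, x i * y i`. -/
def dualCode {F : Type*} [Field F] {n : ℕ} (U : Submodule F (Fin n → F)) :
    Submodule F (Fin n → F) where
  carrier := {z | ∀ u ∈ U, ∑ i, u i * z i = 0}
  add_mem' := by
    intro a b ha hb u hu
    have h1 := ha u hu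
    have h2 := hb u hu
    simp only [Set.mem_setOf_eq] at *
    calc ∑ i, u i * (a + b) i = (∑ i, u i * a i) + ∑ i, u i * b i := by
          rw [← Finset.sum_add_distrib]
          exact Finset.sum_congr rfl fun i _ => by simp [mul_add]
      _ = 0 := by rw [h1, h2, add_zero]
  zero_mem' := by
    intro u hu
    simp
  smul_mem' := by
    intro c a ha u hu
    have h := ha u hu
    simp only [Set.mem_setOf_eq] at *
    calc ∑ i, u i * (c • a) i = c * ∑ i, u i * a i := by
          rw [Finset.mul_sum]
          exact Finset.sum_congr rfl fun i _ => by simp [smul_eq_mul]; ring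
      _ = 0 := by rw [h, mul_zero]


/-- For a linear code `U` with trivial hull and generator matrix `G`,
the row space of `Σ_U = Gᵀ (G Gᵀ)⁻¹ G` (its image under the row-vector action
`v ↦ v Σ_U`) equals `U`; in particular `rank Σ_U = dim U`. -/
theorem statement8 {F : Type*} [Field F] {n k : ℕ}
    (U : Submodule F (Fin n → F))
    (G : Matrix (Fin k) (Fin n) F)
    (hGind : LinearIndependent F G)
    (hGspan : Submodule.span F (Set.range G) = U)
    (hhull : U ⊓ dualCode U = ⊥) :
    LinearMap.range (Matrix.vecMulLinear (Gᵀ * (G * Gᵀ)⁻¹ * G)) = U ∧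
    (Gᵀ * (G * Gᵀ)⁻¹ * G).rank = Module.finrank F U := by

  -- A := G * Gᵀ is invertible
  set A := G * Gᵀ with hA
  have hAunit : IsUnit A := by
    rw [← Matrix.vecMul_injective_iff_isUnit, Matrix.vecMul_injective_iff,
      Fintype.linearIndependent_iff]
    intro v hv
    have hvA : v ᵥ* A = 0 := by
      ext j
      have := congr_fun hv j
      simpa [Matrix.vecMul, dotProduct] using this
    set u := v ᵥ* G with hu
    have h1 : u ᵥ* Gᵀ = 0 := by rw [hu, Matrix.vecMul_vecMul]; exact hvA
    have huU : u ∈ U := by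
      rw [← hGspan, show Set.range G = Set.range G.row from rfl, ← range_vecMulLinear]
      exact ⟨v, rfl⟩
    have hudual : u ∈ dualCode U := by
      intro w hw
      rw [← hGspan] at hw
      induction hw using Submodule.span_induction with
      | mem x hx =>
        obtain ⟨j, rfl⟩ := hx
        calc ∑ i, G j i * u i = (u ᵥ* Gᵀ) j := by
              simp [Matrix.vecMul, dotProduct, mul_comm]
          _ = 0 := by rw [h1]; rfl
      | zero => simp
      | add x y hx hy ihx ihy =>
        simp only [Pi.add_apply, add_mul]
        rw [Finset.sum_add_distrib, ihx, ihy, add_zero]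
      | smul c x hx ih =>
        simp only [Pi.smul_apply, smul_eq_mul, mul_assoc, ← Finset.mul_sum, ih, mul_zero]
    have hu0 : u = 0 := by
      have : u ∈ U ⊓ dualCode U := ⟨huU, hudual⟩
      rwa [hhull, Submodule.mem_bot] at this
    exact Fintype.linearIndependent_iff.mp hGind v (by
      ext j
      have := congr_fun hu0 j
      simpa [hu, Matrix.vecMul, dotProduct] using this)
  have hdet : IsUnit A.det := (Matrix.isUnit_iff_isUnit_det A).mp hAunit
  have hrange : LinearMap.range (Matrix.vecMulLinear (Gᵀ * A⁻¹ * G)) = U := by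
    apply le_antisymm
    · rintro x ⟨v, rfl⟩
      rw [← hGspan, show Set.range G = Set.range G.row from rfl, ← range_vecMulLinear]
      refine ⟨(v ᵥ* Gᵀ) ᵥ* A⁻¹, ?_⟩
      simp [Matrix.vecMulLinear_apply, Matrix.vecMul_vecMul]
    · rw [← hGspan, show Set.range G = Set.range G.row from rfl, ← range_vecMulLinear]
      rintro x ⟨c, rfl⟩
      refine ⟨c ᵥ* G, ?_⟩
      simp only [Matrix.vecMulLinear_apply, Matrix.vecMul_vecMul]
      rw [← Matrix.mul_assoc, ← Matrix.mul_assoc, ← hA, Matrix.mul_nonsing_inv _ hdet,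
        Matrix.one_mul]
  refine ⟨hrange, ?_⟩
  rw [Matrix.rank_eq_finrank_span_row, ← range_vecMulLinear, hrange]
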